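/- Let p be prime and ξ ∈ ℚ_p transcendental. For every positive integer k, (k+1)·(1 + λ_{k+1}(ξ)) ≥ k·(1 + λ_k(ξ)). -/

import Mathlib

open scoped ENNReal
open Finset

def SimAt (p : ℕ) [Fact p.Prime] (n : ℕ) (ξ : ℚ_[p]) (lam X : ℝ) : Prop :=
  ∃ x : ℕ → ℤ, (∀ i ≤ n, (|x i| : ℝ) ≤ X) ∧
    (∃ m, 1 ≤ m ∧ m ≤ n ∧ (x 0 : ℚ_[p]) * ξ ^ m ≠ (x m : ℚ_[p])) ∧
    (∀ m, 1 ≤ m → m ≤ n → ‖(x 0 : ℚ_[p]) * ξ ^ m - (x m : ℚ_[p])‖ ≤ X ^ (-lam - 1))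

/-- The exponent `λ_n(ξ)` of simultaneous rational approximation. -/
noncomputable def lambdaExp (p : ℕ) [Fact p.Prime] (n : ℕ) (ξ : ℚ_[p]) : ℝ≥0∞ :=
  sSup {l : ℝ≥0∞ | ∃ lam : ℝ, l = ENNReal.ofReal lam ∧ ∀ X₀ : ℝ, ∃ X, X₀ ≤ X ∧ SimAt p n ξ lam X}




lemma int_norm_lower (p : ℕ) [Fact p.Prime] (n : ℤ) (hn : n ≠ 0) :
    (|n| : ℝ)⁻¹ ≤ ‖(n : ℚ_[p])‖ := by
  have hp1 : (1:ℝ) < p := by exact_mod_cast (Fact.out : p.Prime).one_lt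
  set v := padicValInt p n with hv
  have hdvd : (p : ℤ) ^ v ∣ n := padicValInt_dvd n
  have hle : (p : ℤ) ^ v ≤ |n| := Int.le_of_dvd (abs_pos.2 hn) ((dvd_abs _ _).2 hdvd)
  have hnorm : ‖(n : ℚ_[p])‖ = (p : ℝ) ^ (-(v:ℤ)) := by
    rw [show ((n : ℚ_[p])) = (((n : ℚ)) : ℚ_[p]) by norm_cast, Padic.eq_padicNorm]
    rw [padicNorm.eq_zpow_of_nonzero (by exact_mod_cast hn)]
    rw [padicValRat.of_int]
    push_cast
    norm_num
    rfl
  rw [hnorm]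
  rw [zpow_neg]
  apply inv_anti₀
  · positivity
  · exact_mod_cast hle


lemma siegel (k : ℕ) (hk : 1 ≤ k) (X : ℝ) (hX : 2 ≤ X) (x : ℕ → ℤ)
    (hx : ∀ i ≤ k, (|x i| : ℝ) ≤ X) :
    ∃ t : ℕ → ℤ, (∃ j, j ≤ k ∧ t j ≠ 0) ∧ (∀ j, k < j → t j = 0) ∧
      (∑ j ∈ Finset.range (k+1), t j * x j = 0) ∧
      ∀ j, (|t j| : ℝ) ≤ (2*(k:ℝ)+4) * X ^ ((1:ℝ)/k) := by
  have hX1 : (1:ℝ) ≤ X := by linarith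
  have hX0 : (0:ℝ) < X := by linarith
  have hkR : (1:ℝ) ≤ (k:ℝ) := by exact_mod_cast hk
  have hk0 : (k:ℝ) ≠ 0 := by positivity
  set z : ℝ := 2*((k:ℝ)+1)*X + 1 with hz
  have hz1 : (1:ℝ) ≤ z := by nlinarith
  set T₀ : ℝ := z ^ ((1:ℝ)/k) with hT₀
  have hT₀1 : (1:ℝ) ≤ T₀ := Real.one_le_rpow hz1 (by positivity)
  set T : ℕ := ⌈T₀⌉₊ with hT
  have hTge : T₀ ≤ (T:ℝ) := Nat.le_ceil _
  have hTle : (T:ℝ) ≤ T₀ + 1 := le_of_lt (Nat.ceil_lt_add_one (by linarith))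
  have hTk : z ≤ ((T:ℝ)+1)^k := by
    have h1 : T₀ ^ (k:ℕ) ≤ ((T:ℝ)+1)^k := pow_le_pow_left₀ (by linarith) (by linarith) k
    have h2 : T₀ ^ (k:ℕ) = z := by
      rw [hT₀, ← Real.rpow_natCast (z ^ ((1:ℝ)/k)) k, ← Real.rpow_mul (by linarith)]
      rw [one_div, inv_mul_cancel₀ hk0, Real.rpow_one]
    linarith [h1, h2.le]
  set N : ℤ := (T:ℤ) * ∑ j ∈ range (k+1), |x j| with hN
  have hsum : ((∑ j ∈ range (k+1), |x j| : ℤ) : ℝ) ≤ ((k:ℝ)+1) * X := by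
    push_cast
    calc (∑ j ∈ range (k+1), (|x j| : ℝ)) ≤ ∑ j ∈ range (k+1), X := by
          apply Finset.sum_le_sum
          intro i hi
          exact hx i (Nat.lt_succ_iff.mp (Finset.mem_range.mp hi))
      _ = ((k:ℝ)+1) * X := by simp [mul_comm]
  have hT0' : (0:ℝ) ≤ (T:ℝ) := by positivity
  have hNbound : (N:ℝ) ≤ (T:ℝ) * (((k:ℝ)+1) * X) := by
    rw [hN]
    push_cast at hsum ⊢
    exact mul_le_mul_of_nonneg_left hsum hT0'
  have hmaps : ∀ v : Fin (k+1) → Fin (T+1),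
      (∑ j : Fin (k+1), (v j : ℤ) * x j) ∈ Finset.Icc (-N) N := by
    intro v
    have habs : |∑ j : Fin (k+1), (v j : ℤ) * x j| ≤ N := by
      calc |∑ j : Fin (k+1), (v j : ℤ) * x j| ≤ ∑ j : Fin (k+1), |(v j : ℤ) * x j| :=
            Finset.abs_sum_le_sum_abs _ _
        _ ≤ ∑ j : Fin (k+1), (T:ℤ) * |x (j:ℕ)| := by
            apply Finset.sum_le_sum
            intro i _
            rw [abs_mul]
            apply mul_le_mul_of_nonneg_right _ (abs_nonneg _)
            rw [Int.abs_natCast]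
            exact_mod_cast Nat.le_of_lt_succ (v i).isLt
        _ = N := by
            rw [hN, Finset.mul_sum, Fin.sum_univ_eq_sum_range (fun j => (T:ℤ) * |x j|)]
    rw [Finset.mem_Icc]
    exact abs_le.mp habs
  have hN0 : (0:ℤ) ≤ N := by rw [hN]; positivity
  have hcard : (Finset.Icc (-N) N).card < Fintype.card (Fin (k+1) → Fin (T+1)) := by
    have hcard1 : (Finset.Icc (-N) N).card = (2*N+1).toNat := by
      rw [Int.card_Icc]; congr 1; omega
    rw [hcard1, Fintype.card_fun, Fintype.card_fin, Fintype.card_fin]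
    have hreal : ((2*N+1 : ℤ) : ℝ) < (((T+1)^(k+1) : ℕ) : ℝ) := by
      have h4 : z * ((T:ℝ)+1) ≤ ((T:ℝ)+1)^k * ((T:ℝ)+1) :=
        mul_le_mul_of_nonneg_right hTk (by positivity)
      have h5 : (2*(N:ℝ)+1) < z * ((T:ℝ)+1) := by nlinarith [hNbound]
      have h6 : (((T+1)^(k+1) : ℕ) : ℝ) = ((T:ℝ)+1)^k * ((T:ℝ)+1) := by
        push_cast; ring
      rw [h6]; push_cast; linarith
    have h7 : ((2*N+1).toNat : ℤ) < (((T+1)^(k+1) : ℕ) : ℤ) := by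
      rw [Int.toNat_of_nonneg (by omega)]
      exact_mod_cast hreal
    exact_mod_cast h7
  obtain ⟨v, -, w, -, hvw, heq⟩ :=
    Finset.exists_ne_map_eq_of_card_lt_of_maps_to
      (s := (Finset.univ : Finset (Fin (k+1) → Fin (T+1))))
      (by rw [Finset.card_univ]; exact hcard) (fun a _ => hmaps a)
  classical
  let t : ℕ → ℤ := fun j => if h : j < k+1 then ((v ⟨j,h⟩ : ℤ) - (w ⟨j,h⟩ : ℤ)) else 0
  have htpos : ∀ j (h : j < k+1), t j = ((v ⟨j,h⟩ : ℤ) - (w ⟨j,h⟩ : ℤ)) := fun j h => dif_pos h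
  have htneg : ∀ j, ¬(j < k+1) → t j = 0 := fun j h => dif_neg h
  refine ⟨t, ?_, ?_, ?_, ?_⟩
  · obtain ⟨i, hi⟩ := Function.ne_iff.mp hvw
    refine ⟨(i:ℕ), Nat.lt_succ_iff.mp i.isLt, ?_⟩
    rw [htpos _ i.isLt]
    simp only [Fin.eta]
    exact sub_ne_zero.mpr (fun hc => hi (Fin.ext (by exact_mod_cast hc)))
  · exact fun j hj => htneg j (by omega)
  · have hconv : ∑ j ∈ range (k+1), t j * x j
        = ∑ j : Fin (k+1), ((v j : ℤ) - (w j : ℤ)) * x (j:ℕ) := by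
      rw [← Fin.sum_univ_eq_sum_range (fun j => t j * x j) (k+1)]
      apply Finset.sum_congr rfl
      intro i _
      rw [htpos _ i.isLt]
    rw [hconv]
    have hsplit : ∑ j : Fin (k+1), ((v j : ℤ) - (w j : ℤ)) * x (j:ℕ)
        = (∑ j : Fin (k+1), (v j : ℤ) * x j) - (∑ j : Fin (k+1), (w j : ℤ) * x j) := by
      rw [← Finset.sum_sub_distrib]
      apply Finset.sum_congr rfl
      intro i _
      ring
    rw [hsplit, heq, sub_self]
  · intro j
    by_cases h : j < k+1
    · rw [htpos j h]
      have h1 : |(v ⟨j,h⟩ : ℤ) - (w ⟨j,h⟩ : ℤ)| ≤ (T:ℤ) := by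
        have hv' : (v ⟨j,h⟩ : ℤ) ≤ T := by exact_mod_cast Nat.le_of_lt_succ (v ⟨j,h⟩).isLt
        have hw' : (w ⟨j,h⟩ : ℤ) ≤ T := by exact_mod_cast Nat.le_of_lt_succ (w ⟨j,h⟩).isLt
        have hv0 : (0:ℤ) ≤ (v ⟨j,h⟩ : ℤ) := by positivity
        have hw0 : (0:ℤ) ≤ (w ⟨j,h⟩ : ℤ) := by positivity
        rw [abs_le]; omega
      have h2 : (T:ℝ) ≤ (2*(k:ℝ)+4) * X ^ ((1:ℝ)/k) := by
        have hXk1 : (1:ℝ) ≤ X ^ ((1:ℝ)/k) := Real.one_le_rpow hX1 (by positivity)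
        have hz2 : z ≤ (2*(k:ℝ)+3) * X := by rw [hz]; nlinarith
        have h3 : T₀ ≤ ((2*(k:ℝ)+3) * X) ^ ((1:ℝ)/k) :=
          Real.rpow_le_rpow (by linarith) hz2 (by positivity)
        have h4 : ((2*(k:ℝ)+3) * X) ^ ((1:ℝ)/k)
            = (2*(k:ℝ)+3) ^ ((1:ℝ)/k) * X ^ ((1:ℝ)/k) :=
          Real.mul_rpow (by linarith) (by linarith)
        have h5 : (2*(k:ℝ)+3) ^ ((1:ℝ)/k) ≤ (2*(k:ℝ)+3) := by
          calc (2*(k:ℝ)+3) ^ ((1:ℝ)/k) ≤ (2*(k:ℝ)+3) ^ (1:ℝ) := by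
                apply Real.rpow_le_rpow_of_exponent_le (by linarith)
                rw [div_le_one (by positivity)]; exact hkR
            _ = _ := Real.rpow_one _
        have h6 : (2*(k:ℝ)+3) ^ ((1:ℝ)/k) * X ^ ((1:ℝ)/k) ≤ (2*(k:ℝ)+3) * X ^ ((1:ℝ)/k) :=
          mul_le_mul_of_nonneg_right h5 (by positivity)
        calc (T:ℝ) ≤ T₀ + 1 := hTle
          _ ≤ (2*(k:ℝ)+3) * X ^ ((1:ℝ)/k) + 1 := by linarith [h3, h4.le, h6]
          _ ≤ (2*(k:ℝ)+4) * X ^ ((1:ℝ)/k) := by nlinarith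
      have h1' : |(((v ⟨j,h⟩ : ℤ) - (w ⟨j,h⟩ : ℤ) : ℤ) : ℝ)| ≤ (T:ℝ) := by
        rw [← Int.cast_abs]; exact_mod_cast h1
      exact le_trans h1' h2
    · rw [htneg j h]
      simp only [abs_zero, Int.cast_zero]
      positivity

set_option maxHeartbeats 1600000 in
lemma construction (p : ℕ) [Fact p.Prime] (ξ : ℚ_[p]) (hξ : Transcendental ℚ ξ)
    (k : ℕ) (hk : 1 ≤ k) (lam : ℝ) (hlam : 1/(k:ℝ) < lam)
    (hP : ∀ X₀ : ℝ, ∃ X, X₀ ≤ X ∧ SimAt p k ξ lam X)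
    (μ : ℝ) (hμ : (μ + 1) * (((k:ℝ)+1)/k) < lam + 1) :
    ∀ Y₀ : ℝ, ∃ Y, Y₀ ≤ Y ∧ SimAt p (k+1) ξ μ Y := by
  intro Y₀
  have hkR : (1:ℝ) ≤ (k:ℝ) := by exact_mod_cast hk
  have hk0 : (k:ℝ) ≠ 0 := by positivity
  have hlam0 : 0 < lam := lt_trans (by positivity) hlam
  set q : ℝ := ((k:ℝ)+1)/k with hq
  have hq1 : 1 ≤ q := by rw [hq, le_div_iff₀ (by positivity)]; linarith
  set Cξ : ℝ := (max 1 ‖ξ‖)^(k+1) with hCξ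
  have hCξ1 : 1 ≤ Cξ := one_le_pow₀ (le_max_left _ _)
  set C₁ : ℝ := (2*(k:ℝ)+3) * Cξ with hC₁
  have hC₁1 : 1 ≤ C₁ := by nlinarith
  set A : ℝ := (2*(k:ℝ)+4)^2 with hA
  have hA1 : 1 ≤ A := by nlinarith
  have hA0 : 0 ≤ A := by linarith
  set δ : ℝ := (lam+1) - (μ+1)*q with hδ
  have hδ0 : 0 < δ := by rw [hδ]; linarith [hμ]
  set B : ℝ := max 1 (C₁ * A ^ (μ+1)) with hB
  have hB1 : (1:ℝ) ≤ B := le_max_left _ _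
  obtain ⟨X, hXge, hSim⟩ := hP (max (max 2 Y₀) (B ^ (1/δ)))
  unfold SimAt at hSim
  obtain ⟨x, hxsize, ⟨m₀, hm₀1, hm₀k, hm₀ne⟩, hxapp⟩ := hSim
  have hX2 : (2:ℝ) ≤ X := le_trans (le_trans (le_max_left _ _) (le_max_left _ _)) hXge
  have hXY₀ : Y₀ ≤ X := le_trans (le_trans (le_max_right _ _) (le_max_left _ _)) hXge
  have hXB : B ^ ((1:ℝ)/δ) ≤ X := le_trans (le_max_right _ _) hXge
  have hX1 : (1:ℝ) ≤ X := by linarith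
  have hX0 : (0:ℝ) < X := by linarith
  set E : ℝ := X ^ (-lam - 1) with hE
  have hE0 : 0 ≤ E := Real.rpow_nonneg hX0.le _
  -- x 0 ≠ 0
  have hx0 : x 0 ≠ 0 := by
    intro h0
    have hxm : (x m₀ : ℚ_[p]) ≠ 0 := by
      intro hc
      apply hm₀ne
      rw [h0, hc]
      push_cast
      ring
    have hxmZ : x m₀ ≠ 0 := fun hc => hxm (by rw [hc]; push_cast; rfl)
    have h1 : (|x m₀| : ℝ)⁻¹ ≤ ‖(x m₀ : ℚ_[p])‖ := int_norm_lower p _ hxmZ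
    have h2 : ‖(x 0 : ℚ_[p]) * ξ ^ m₀ - (x m₀ : ℚ_[p])‖ = ‖(x m₀ : ℚ_[p])‖ := by
      rw [h0]
      push_cast
      rw [zero_mul, zero_sub, norm_neg]
    have h3 := hxapp m₀ hm₀1 hm₀k
    rw [h2] at h3
    have h4 : X⁻¹ ≤ (|x m₀| : ℝ)⁻¹ := by
      apply inv_anti₀
      · have : (0:ℤ) < |x m₀| := abs_pos.mpr hxmZ
        exact_mod_cast this
      · exact hxsize m₀ hm₀k
    have h5 : X ^ (-lam - 1) < X⁻¹ := by
      rw [← Real.rpow_neg_one X]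
      apply Real.rpow_lt_rpow_of_exponent_lt (by linarith)
      linarith
    linarith
  -- Siegel
  obtain ⟨t, ⟨j₀, hj₀k, hj₀ne⟩, htgt, hrel, htb⟩ := siegel k hk X hX2 x hxsize
  set r : ℕ := Nat.findGreatest (fun j => t j ≠ 0) k with hr
  have htr : t r ≠ 0 := Nat.findGreatest_spec (P := fun j => t j ≠ 0) hj₀k hj₀ne
  have hrk : r ≤ k := Nat.findGreatest_le k
  have htzero : ∀ j, r < j → t j = 0 := by
    intro j hj
    by_cases hjk : j ≤ k
    · by_contra hne
      exact absurd (Nat.findGreatest_is_greatest (P := fun j => t j ≠ 0) hj hjk hne) (by simp)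
    · exact htgt j (by omega)
  clear_value r
  set e : ℕ → ℚ_[p] := fun m => (x 0 : ℚ_[p]) * ξ ^ m - (x m : ℚ_[p]) with he_def
  have he_pt : ∀ m, e m = (x 0 : ℚ_[p]) * ξ ^ m - (x m : ℚ_[p]) := fun m => rfl
  have he : ∀ m ≤ k, ‖e m‖ ≤ E := by
    intro m hm
    rcases Nat.eq_zero_or_pos m with h | h
    · have : e m = 0 := by rw [he_def, h]; simp
      rw [this, norm_zero]; exact hE0
    · exact hxapp m h hm
  have htnorm : ∀ j, ‖(t j : ℚ_[p])‖ ≤ 1 := fun j => Padic.norm_int_le_one _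
  -- the new vector
  set y : ℕ → ℤ := fun m => if m ≤ k then t r * x m
      else -∑ j ∈ Finset.range r, t j * x (j + (k+1) - r) with hy_def
  have hy_le : ∀ m, m ≤ k → y m = t r * x m := by
    intro m hm; rw [hy_def]; exact if_pos hm
  have hy_top : y (k+1) = -∑ j ∈ Finset.range r, t j * x (j + (k+1) - r) := by
    rw [hy_def]; exact if_neg (by omega)
  clear_value e y
  set Y : ℝ := A * X ^ q with hY
  have hXq1 : (1:ℝ) ≤ X ^ q := Real.one_le_rpow hX1 (by linarith)
  have hYX : X ≤ Y := by
    calc X = 1 * X ^ (1:ℝ) := by rw [one_mul, Real.rpow_one]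
      _ ≤ A * X ^ q := by
          apply mul_le_mul hA1 (Real.rpow_le_rpow_of_exponent_le hX1 hq1)
            (by positivity) hA0
  have hY0 : 0 < Y := lt_of_lt_of_le hX0 hYX
  -- size bound for single products
  have hTX : ∀ j i, i ≤ k → |(t j : ℝ) * (x i : ℝ)| ≤ (2*(k:ℝ)+4) * (X ^ ((1:ℝ)/k) * X) := by
    intro j i hi
    rw [abs_mul]
    have h1 := htb j
    have h2 := hxsize i hi
    have ht0 : (0:ℝ) ≤ (|t j| : ℝ) := by positivity
    have hx0' : (0:ℝ) ≤ (|x i| : ℝ) := by positivity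
    calc (|t j| : ℝ) * (|x i| : ℝ) ≤ ((2*(k:ℝ)+4) * X ^ ((1:ℝ)/k)) * X := by
          apply mul_le_mul h1 h2 hx0' (by positivity)
      _ = (2*(k:ℝ)+4) * (X ^ ((1:ℝ)/k) * X) := by ring
  have hXqq : X ^ ((1:ℝ)/k) * X = X ^ q := by
    have hq' : q = 1/(k:ℝ) + 1 := by rw [hq]; field_simp; ring
    rw [hq', Real.rpow_add hX0, Real.rpow_one]
  -- prove SimAt
  refine ⟨Y, le_trans hXY₀ hYX, ?_⟩
  unfold SimAt
  refine ⟨y, ?_, ?_, ?_⟩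
  · -- sizes
    intro i hi
    by_cases hik : i ≤ k
    · rw [hy_le i hik]
      push_cast
      calc |(t r : ℝ) * (x i : ℝ)| ≤ (2*(k:ℝ)+4) * (X ^ ((1:ℝ)/k) * X) := hTX r i hik
        _ = (2*(k:ℝ)+4) * X ^ q := by rw [hXqq]
        _ ≤ A * X ^ q := by
            apply mul_le_mul_of_nonneg_right _ (by positivity)
            rw [hA]; nlinarith
    · have hik1 : i = k+1 := by omega
      rw [hik1, hy_top]
      push_cast
      rw [abs_neg]
      have h1 : |∑ j ∈ Finset.range r, (t j : ℝ) * (x (j + (k+1) - r) : ℝ)|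
          ≤ ∑ j ∈ Finset.range r, |(t j : ℝ) * (x (j + (k+1) - r) : ℝ)| :=
        Finset.abs_sum_le_sum_abs _ _
      have h2 : ∑ j ∈ Finset.range r, |(t j : ℝ) * (x (j + (k+1) - r) : ℝ)|
          ≤ ∑ j ∈ Finset.range r, (2*(k:ℝ)+4) * (X ^ ((1:ℝ)/k) * X) := by
        apply Finset.sum_le_sum
        intro j hj
        have hjr : j < r := Finset.mem_range.mp hj
        have : j + (k+1) - r ≤ k := by omega
        exact hTX j _ this
      have h3 : ∑ j ∈ Finset.range r, (2*(k:ℝ)+4) * (X ^ ((1:ℝ)/k) * X)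
          = (r:ℝ) * ((2*(k:ℝ)+4) * X ^ q) := by
        rw [Finset.sum_const, Finset.card_range, nsmul_eq_mul, hXqq]
      have h4 : (r:ℝ) * ((2*(k:ℝ)+4) * X ^ q) ≤ A * X ^ q := by
        have hrR : (r:ℝ) ≤ (k:ℝ) := by exact_mod_cast hrk
        have hXq0 : (0:ℝ) ≤ X ^ q := by positivity
        rw [hA]
        have hstep : (r:ℝ) * X ^ q ≤ (k:ℝ) * X ^ q := mul_le_mul_of_nonneg_right hrR hXq0
        nlinarith [hstep, hXq0, hkR]
      linarith [h1, h2]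
  · -- nontriviality
    refine ⟨1, le_refl 1, by omega, ?_⟩
    intro hcontra
    rw [hy_le 0 (by omega), hy_le 1 hk, pow_one] at hcontra
    set y0 : ℤ := t r * x 0 with hy0
    set y1 : ℤ := t r * x 1 with hy1
    have hy0ne : y0 ≠ 0 := mul_ne_zero htr hx0
    apply hξ
    refine ⟨Polynomial.C ((y0:ℚ)) * Polynomial.X - Polynomial.C ((y1:ℚ)), ?_, ?_⟩
    · intro hzero
      have hcoeff := congrArg (fun P => Polynomial.coeff P 1) hzero
      simp only [Polynomial.coeff_sub, Polynomial.coeff_C_mul, Polynomial.coeff_X_one,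
        Polynomial.coeff_C, mul_one, Polynomial.coeff_zero] at hcoeff
      norm_num at hcoeff
      exact hy0ne (by exact_mod_cast hcoeff)
    · simp only [map_sub, map_mul, Polynomial.aeval_C, Polynomial.aeval_X]
      rw [map_intCast, map_intCast, hcontra, sub_self]
  · -- approximation bounds
    intro m hm1 hmk1
    have hfinal : C₁ * E ≤ Y ^ (-μ - 1) := by
      have hB0 : (0:ℝ) ≤ B := by linarith
      have hXδ : C₁ * A ^ (μ+1) ≤ X ^ δ := by
        have h1 : (B ^ ((1:ℝ)/δ)) ^ δ ≤ X ^ δ :=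
          Real.rpow_le_rpow (by positivity) hXB hδ0.le
        have h2 : (B ^ ((1:ℝ)/δ)) ^ δ = B := by
          rw [← Real.rpow_mul hB0, one_div, inv_mul_cancel₀ hδ0.ne', Real.rpow_one]
        have h3 : C₁ * A ^ (μ+1) ≤ B := le_max_right _ _
        linarith [h1, h2.le, h2.ge]
      have hy1 : Y ^ (-μ-1) = A ^ (-μ-1) * X ^ (q * (-μ-1)) := by
        rw [hY, Real.mul_rpow hA0 (by positivity), ← Real.rpow_mul hX0.le]
      have hE_split : E = X ^ (q * (-μ-1)) * X ^ (-δ) := by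
        rw [hE, ← Real.rpow_add hX0]
        congr 1
        rw [hδ]; ring
      have hA' : A ^ (-μ-1) = (A ^ (μ+1))⁻¹ := by
        rw [show -μ-1 = -(μ+1) by ring, Real.rpow_neg hA0]
      have hXd' : X ^ (-δ) = (X ^ δ)⁻¹ := Real.rpow_neg hX0.le δ
      rw [hE_split, hy1, hA', hXd']
      have hP1 : (0:ℝ) < X ^ (q * (-μ-1)) := Real.rpow_pos_of_pos hX0 _
      have hP2 : (0:ℝ) < X ^ δ := Real.rpow_pos_of_pos hX0 _
      have hP3 : (0:ℝ) < A ^ (μ+1) := Real.rpow_pos_of_pos (by linarith) _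
      rw [show C₁ * (X ^ (q*(-μ-1)) * (X^δ)⁻¹) = (C₁ / X^δ) * X ^ (q*(-μ-1)) by ring,
          show (A^(μ+1))⁻¹ * X ^ (q*(-μ-1)) = (1 / A^(μ+1)) * X ^ (q*(-μ-1)) by ring]
      apply mul_le_mul_of_nonneg_right _ hP1.le
      rw [div_le_div_iff₀ hP2 hP3]
      linarith [hXδ]
    by_cases hmk : m ≤ k
    · rw [hy_le 0 (by omega), hy_le m hmk]
      have hid : ((t r * x 0 : ℤ) : ℚ_[p]) * ξ ^ m - ((t r * x m : ℤ) : ℚ_[p])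
          = (t r : ℚ_[p]) * e m := by
        rw [he_pt]; push_cast; ring
      rw [hid, norm_mul]
      calc ‖(t r : ℚ_[p])‖ * ‖e m‖ ≤ 1 * E :=
            mul_le_mul (htnorm r) (he m hmk) (norm_nonneg _) zero_le_one
        _ = E := one_mul E
        _ ≤ C₁ * E := by nlinarith [hE0, hC₁1]
        _ ≤ _ := hfinal
    · have hmeq : m = k+1 := by omega
      subst hmeq
      rw [hy_le 0 (by omega), hy_top]
      have hpow : ξ ^ (k+1-r) * ξ ^ r = ξ ^ (k+1) := by
        rw [← pow_add]; congr 1; omega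
      set S : ℚ_[p] := ∑ j ∈ Finset.range (k+1), (t j : ℚ_[p]) * e j with hS
      set S₂ : ℚ_[p] := ∑ j ∈ Finset.range r, (t j : ℚ_[p]) * e (j + (k+1) - r) with hS₂
      set P : ℚ_[p] := ∑ j ∈ Finset.range r, (t j : ℚ_[p]) * ((x 0 : ℚ_[p]) * ξ ^ j) with hPdef
      have hrel' : ∑ j ∈ Finset.range (k+1), (t j : ℚ_[p]) * (x j : ℚ_[p]) = 0 := by
        have hc := congrArg (fun z : ℤ => (z : ℚ_[p])) hrel
        push_cast at hc
        simpa using hc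
      have hS_eq : S = P + (t r : ℚ_[p]) * ((x 0 : ℚ_[p]) * ξ ^ r) := by
        have h1 : S = ∑ j ∈ Finset.range (k+1), (t j : ℚ_[p]) * ((x 0:ℚ_[p]) * ξ ^ j)
            - ∑ j ∈ Finset.range (k+1), (t j : ℚ_[p]) * (x j : ℚ_[p]) := by
          rw [hS, ← Finset.sum_sub_distrib]
          apply Finset.sum_congr rfl; intro j _
          rw [he_pt]; ring
        rw [h1, hrel', sub_zero]
        have h2 : ∑ j ∈ Finset.range (k+1), (t j : ℚ_[p]) * ((x 0:ℚ_[p]) * ξ ^ j)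
            = ∑ j ∈ Finset.range (r+1), (t j : ℚ_[p]) * ((x 0:ℚ_[p]) * ξ ^ j) := by
          symm
          apply Finset.sum_subset
          · intro i hi
            rw [Finset.mem_range] at *
            omega
          · intro i hi hni
            rw [Finset.mem_range] at hi hni
            have hti : t i = 0 := htzero i (by omega)
            rw [hti]
            push_cast
            ring
        rw [h2, Finset.sum_range_succ, hPdef]
      have hS₂_eq : S₂ = ξ ^ (k+1-r) * P
          - ∑ j ∈ Finset.range r, (t j : ℚ_[p]) * (x (j + (k+1) - r) : ℚ_[p]) := by
        rw [hS₂, hPdef, Finset.mul_sum, ← Finset.sum_sub_distrib]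
        apply Finset.sum_congr rfl; intro j hj
        have hjr : j < r := Finset.mem_range.mp hj
        rw [he_pt]
        rw [show j + (k+1) - r = (k+1-r) + j by omega, pow_add]
        ring
      have hkey : ((t r * x 0 : ℤ) : ℚ_[p]) * ξ ^ (k+1)
          - ((-∑ j ∈ Finset.range r, t j * x (j + (k+1) - r) : ℤ) : ℚ_[p])
          = ξ ^ (k+1-r) * S - S₂ := by
        rw [hS_eq, hS₂_eq]
        push_cast
        linear_combination (-((t r : ℚ_[p]) * (x 0 : ℚ_[p]))) * hpow
      rw [hkey]
      have hnS : ‖S‖ ≤ ((k:ℝ)+1) * E := by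
        calc ‖S‖ ≤ ∑ j ∈ Finset.range (k+1), ‖(t j : ℚ_[p]) * e j‖ := norm_sum_le _ _
          _ ≤ ∑ _j ∈ Finset.range (k+1), E := by
              apply Finset.sum_le_sum
              intro j hj
              have hjk : j ≤ k := by
                have := Finset.mem_range.mp hj
                omega
              rw [norm_mul]
              calc ‖(t j:ℚ_[p])‖ * ‖e j‖ ≤ 1 * E :=
                    mul_le_mul (htnorm j) (he j hjk) (norm_nonneg _) zero_le_one
                _ = E := one_mul E
          _ = ((k:ℝ)+1) * E := by
              rw [Finset.sum_const, Finset.card_range, nsmul_eq_mul]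
              push_cast
              ring
      have hnS₂ : ‖S₂‖ ≤ (k:ℝ) * E := by
        calc ‖S₂‖ ≤ ∑ j ∈ Finset.range r, ‖(t j : ℚ_[p]) * e (j + (k+1) - r)‖ := norm_sum_le _ _
          _ ≤ ∑ _j ∈ Finset.range r, E := by
              apply Finset.sum_le_sum
              intro j hj
              have hjr : j < r := Finset.mem_range.mp hj
              have hjk : j + (k+1) - r ≤ k := by omega
              rw [norm_mul]
              calc ‖(t j:ℚ_[p])‖ * ‖e (j + (k+1) - r)‖ ≤ 1 * E :=
                    mul_le_mul (htnorm j) (he _ hjk) (norm_nonneg _) zero_le_one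
                _ = E := one_mul E
          _ = (r:ℝ) * E := by
              rw [Finset.sum_const, Finset.card_range, nsmul_eq_mul]
          _ ≤ (k:ℝ) * E := by
              have hrR : (r:ℝ) ≤ (k:ℝ) := by exact_mod_cast hrk
              exact mul_le_mul_of_nonneg_right hrR hE0
      have hnξ : ‖ξ ^ (k+1-r)‖ ≤ Cξ := by
        rw [norm_pow]
        calc ‖ξ‖ ^ (k+1-r) ≤ (max 1 ‖ξ‖) ^ (k+1-r) :=
              pow_le_pow_left₀ (norm_nonneg _) (le_max_right _ _) _
          _ ≤ (max 1 ‖ξ‖) ^ (k+1) := pow_le_pow_right₀ (le_max_left _ _) (by omega)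
          _ = Cξ := hCξ.symm
      calc ‖ξ ^ (k+1-r) * S - S₂‖ ≤ ‖ξ ^ (k+1-r) * S‖ + ‖S₂‖ := norm_sub_le _ _
        _ = ‖ξ ^ (k+1-r)‖ * ‖S‖ + ‖S₂‖ := by rw [norm_mul]
        _ ≤ Cξ * (((k:ℝ)+1) * E) + (k:ℝ) * E := by
            apply add_le_add _ hnS₂
            exact mul_le_mul hnξ hnS (norm_nonneg _) (by linarith)
        _ ≤ C₁ * E := by
            rw [hC₁]
            nlinarith [mul_nonneg (mul_nonneg (sub_nonneg.mpr hCξ1)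
              (by positivity : (0:ℝ) ≤ (k:ℝ))) hE0, hE0, hCξ1, hkR]
        _ ≤ Y ^ (-μ - 1) := hfinal

/-- `(k+1)(1 + λ_{k+1}(ξ)) ≥ k(1 + λ_k(ξ))` for transcendental `ξ`. -/
theorem stmt8 (p : ℕ) [Fact p.Prime] (ξ : ℚ_[p]) (hξ : Transcendental ℚ ξ)
    (k : ℕ) (hk : 1 ≤ k) :
    (k : ℝ≥0∞) * (1 + lambdaExp p k ξ) ≤ (k + 1 : ℝ≥0∞) * (1 + lambdaExp p (k + 1) ξ) := by
  have hkR : (1:ℝ) ≤ (k:ℝ) := by exact_mod_cast hk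
  have hk0 : (k:ℝ) ≠ 0 := by positivity
  set L : ℝ≥0∞ := lambdaExp p (k+1) ξ with hL
  have hRHS : (k:ℝ≥0∞) + 1 ≤ (k + 1 : ℝ≥0∞) * (1 + L) := by
    calc (k:ℝ≥0∞) + 1 = (k + 1 : ℝ≥0∞) * 1 := by rw [mul_one]
      _ ≤ (k + 1 : ℝ≥0∞) * (1 + L) := mul_le_mul_right (self_le_add_right 1 L) _
  have key : ∀ lam : ℝ, (∀ X₀ : ℝ, ∃ X, X₀ ≤ X ∧ SimAt p k ξ lam X) →
      (k : ℝ≥0∞) * (1 + ENNReal.ofReal lam) ≤ (k + 1 : ℝ≥0∞) * (1 + L) := by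
    intro lam hP
    by_cases hcase : lam ≤ 1/(k:ℝ)
    · have h2 : (k:ℝ≥0∞) * ENNReal.ofReal (1/(k:ℝ)) = 1 := by
        rw [show ((k:ℕ):ℝ≥0∞) = ENNReal.ofReal ((k:ℕ):ℝ) from (ENNReal.ofReal_natCast k).symm]
        rw [← ENNReal.ofReal_mul (by positivity)]
        rw [mul_one_div, div_self hk0, ENNReal.ofReal_one]
      calc (k:ℝ≥0∞) * (1 + ENNReal.ofReal lam)
          ≤ (k:ℝ≥0∞) * (1 + ENNReal.ofReal (1/(k:ℝ))) :=
            mul_le_mul_right (add_le_add_right (ENNReal.ofReal_le_ofReal hcase) 1) _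
        _ = (k:ℝ≥0∞) + (k:ℝ≥0∞) * ENNReal.ofReal (1/(k:ℝ)) := by rw [mul_add, mul_one]
        _ = (k:ℝ≥0∞) + 1 := by rw [h2]
        _ ≤ _ := hRHS
    · push_neg at hcase
      have hlam0 : 0 < lam := lt_trans (by positivity) hcase
      set μ₀ : ℝ := (k:ℝ)*(1+lam)/((k:ℝ)+1) - 1 with hμ₀
      have hklam : (k:ℝ)+1 < (k:ℝ)*(1+lam) := by
        have : 1 < (k:ℝ)*lam := by
          rw [div_lt_iff₀ (by positivity)] at hcase
          linarith
        nlinarith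
      have hμ₀0 : 0 < μ₀ := by
        rw [hμ₀, sub_pos, lt_div_iff₀ (by positivity)]
        linarith
      have hμ₀q : (μ₀ + 1) * (((k:ℝ)+1)/k) = lam + 1 := by
        rw [hμ₀]
        field_simp
        ring
      clear_value μ₀
      have hmem : ENNReal.ofReal μ₀ ≤ L := by
        by_contra hcon
        push_neg at hcon
        have hLtop : L ≠ ⊤ := hcon.ne_top
        have hLt : L.toReal < μ₀ := (ENNReal.lt_ofReal_iff_toReal_lt hLtop).mp hcon
        have hT0 : (0:ℝ) ≤ L.toReal := ENNReal.toReal_nonneg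
        set μ : ℝ := (L.toReal + μ₀)/2 with hμdef
        have hμlt : μ < μ₀ := by rw [hμdef]; linarith
        have hμgt : L.toReal < μ := by rw [hμdef]; linarith
        have hμpos : 0 < μ := by rw [hμdef]; linarith
        have hμarg : (μ + 1) * (((k:ℝ)+1)/k) < lam + 1 := by
          rw [← hμ₀q]
          apply mul_lt_mul_of_pos_right (by linarith) (by positivity)
        have hPk1 := construction p ξ hξ k hk lam hcase hP μ hμarg
        have hle : ENNReal.ofReal μ ≤ L := by
          rw [hL, lambdaExp]
          exact le_sSup ⟨μ, rfl, hPk1⟩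
        have hlt : L < ENNReal.ofReal μ := by
          calc L = ENNReal.ofReal L.toReal := (ENNReal.ofReal_toReal hLtop).symm
            _ < ENNReal.ofReal μ := (ENNReal.ofReal_lt_ofReal_iff hμpos).mpr hμgt
        exact absurd hle (not_le.mpr hlt)
      have harith : (k : ℝ≥0∞) * (1 + ENNReal.ofReal lam)
          = (k + 1 : ℝ≥0∞) * (1 + ENNReal.ofReal μ₀) := by
        rw [show (1:ℝ≥0∞) + ENNReal.ofReal lam = ENNReal.ofReal (1+lam) by
              rw [ENNReal.ofReal_add (by norm_num) hlam0.le, ENNReal.ofReal_one]]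
        rw [show (1:ℝ≥0∞) + ENNReal.ofReal μ₀ = ENNReal.ofReal (1+μ₀) by
              rw [ENNReal.ofReal_add (by norm_num) hμ₀0.le, ENNReal.ofReal_one]]
        rw [show ((k:ℝ≥0∞) + 1) = ENNReal.ofReal ((k:ℝ)+1) by
              rw [ENNReal.ofReal_add (by positivity) (by norm_num), ENNReal.ofReal_natCast,
                ENNReal.ofReal_one]]
        rw [show ((k:ℕ):ℝ≥0∞) = ENNReal.ofReal ((k:ℕ):ℝ) from (ENNReal.ofReal_natCast k).symm]
        rw [← ENNReal.ofReal_mul (by positivity), ← ENNReal.ofReal_mul (by positivity)]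
        congr 1
        rw [hμ₀]
        field_simp
        ring
      rw [harith]
      exact mul_le_mul_right (add_le_add_right hmem 1) _
  -- combine with sSup
  rw [lambdaExp]
  set S : Set ℝ≥0∞ :=
    {l : ℝ≥0∞ | ∃ lam : ℝ, l = ENNReal.ofReal lam ∧ ∀ X₀ : ℝ, ∃ X, X₀ ≤ X ∧ SimAt p k ξ lam X}
    with hSdef
  rcases Set.eq_empty_or_nonempty S with hemp | hne
  · rw [hemp, sSup_empty]
    have h1 : (k:ℝ≥0∞) * (1 + ⊥) = (k:ℝ≥0∞) := by simp
    rw [h1]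
    exact le_trans le_self_add hRHS
  · have hne' : Nonempty S := hne.to_subtype
    rw [sSup_eq_iSup' S, ENNReal.add_iSup, ENNReal.mul_iSup]
    apply iSup_le
    intro l
    obtain ⟨lam, hlam, hPl⟩ := l.2
    rw [hlam]
    exact key lam hPl
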